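/- Let d ∈ ℝⁿ with d ≠ 0, let ε > 0 and κ ≥ 1, and set z = d/‖d‖₂. Then Σ_{i=1}^{n} d_i · z_i / (ε^κ + |z_i|^κ)^{1/κ} ≥ ‖d‖₂ / (1 + ε). -/

import Mathlib

open scoped BigOperators

/-- For `d ≠ 0` in `ℝⁿ`, `ε > 0`, `κ ≥ 1` and `z = d/‖d‖₂`, the inner product
`⟨d, ∇φ*(z)⟩ = Σᵢ dᵢ · zᵢ/(ε^κ + |zᵢ|^κ)^{1/κ}` is at least `‖d‖₂/(1+ε)`. -/

private lemma real_rpow_add_rpow_le_add {p a b : ℝ} (ha : 0 ≤ a) (hb : 0 ≤ b)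
    (hp1 : 1 ≤ p) : (a ^ p + b ^ p) ^ (1 / p) ≤ a + b := by
  have h := NNReal.rpow_add_rpow_le_add a.toNNReal b.toNNReal hp1
  have := NNReal.coe_le_coe.mpr h
  push_cast [NNReal.coe_rpow, Real.coe_toNNReal _ ha, Real.coe_toNNReal _ hb] at this
  exact this

theorem spectral_precond_lower_bound {n : ℕ} (d : EuclideanSpace ℝ (Fin n)) (hd : d ≠ 0)
    (ε κ : ℝ) (hε : 0 < ε) (hκ : 1 ≤ κ) :
    ‖d‖ / (1 + ε) ≤
      ∑ i : Fin n, d i * ((d i / ‖d‖) / (ε ^ κ + |d i / ‖d‖| ^ κ) ^ (1 / κ)) := by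
  have hD : 0 < ‖d‖ := norm_pos_iff.mpr hd
  have hsum : ∑ i : Fin n, (d i) ^ 2 = ‖d‖ ^ 2 := by
    rw [EuclideanSpace.norm_eq, Real.sq_sqrt (by positivity)]
    simp [Real.norm_eq_abs, sq_abs]
  have key : ∀ i : Fin n, (d i) ^ 2 / (‖d‖ * (1 + ε)) ≤
      d i * ((d i / ‖d‖) / (ε ^ κ + |d i / ‖d‖| ^ κ) ^ (1 / κ)) := by
    intro i
    have hzsq : (d i) ^ 2 ≤ ‖d‖ ^ 2 := hsum ▸ Finset.single_le_sum
      (fun j _ => sq_nonneg (d j)) (Finset.mem_univ i)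
    have hz1 : |d i / ‖d‖| ≤ 1 := by
      rw [abs_div, abs_of_pos hD, div_le_one hD]
      nlinarith [abs_nonneg (d i), sq_abs (d i)]
    have hA : (ε ^ κ + |d i / ‖d‖| ^ κ) ^ (1 / κ) ≤ 1 + ε := by
      calc (ε ^ κ + |d i / ‖d‖| ^ κ) ^ (1 / κ) ≤ ε + |d i / ‖d‖| :=
            real_rpow_add_rpow_le_add hε.le (abs_nonneg _) hκ
        _ ≤ 1 + ε := by linarith
    have hApos : 0 < (ε ^ κ + |d i / ‖d‖| ^ κ) ^ (1 / κ) := by positivity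
    have h1 : (d i) ^ 2 / (‖d‖ * (1 + ε)) ≤
        (d i) ^ 2 / (‖d‖ * (ε ^ κ + |d i / ‖d‖| ^ κ) ^ (1 / κ)) := by
      gcongr
    refine h1.trans_eq ?_
    field_simp
  calc ‖d‖ / (1 + ε) = (∑ i : Fin n, (d i) ^ 2) / (‖d‖ * (1 + ε)) := by
        rw [hsum]; field_simp
    _ = ∑ i : Fin n, (d i) ^ 2 / (‖d‖ * (1 + ε)) := Finset.sum_div _ _ _
    _ ≤ _ := Finset.sum_le_sum fun i _ => key i
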